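/- Let k(x,x') = exp(−‖x−x'‖²/(2ℓ²)) be the squared exponential kernel on ℝ^D with length scale ℓ > 0. For s drawn from N(0, ℓ^{-2} I_D) and b uniform on [0, 2π], define φ_{s,b}(x) = √2 cos(sᵀx + b). Then E_{s,b}[φ_{s,b}(x) φ_{s,b}(x')] = k(x, x') for all x, x' ∈ ℝ^D. -/

import Mathlib

open MeasureTheory ProbabilityTheory Real Complex
open scoped NNReal ENNReal

lemma inner_int (a c : ℝ) :
    (∫ b : ℝ, (Real.sqrt 2 * Real.cos (a + b)) * (Real.sqrt 2 * Real.cos (c + b))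
      ∂(ENNReal.ofReal (2 * π)⁻¹ • volume.restrict (Set.Icc 0 (2 * π))))
      = Real.cos (a - c) := by
  have h2 : (0:ℝ) < 2 * π := by positivity
  have hint : ∀ b : ℝ, (Real.sqrt 2 * Real.cos (a + b)) * (Real.sqrt 2 * Real.cos (c + b))
      = Real.cos (a - c) + Real.cos (2 * b + (a + c)) := by
    intro b
    have hs : Real.sqrt 2 * Real.sqrt 2 = 2 := Real.mul_self_sqrt (by norm_num)
    have := Real.two_mul_cos_mul_cos (a + b) (c + b)
    calc (Real.sqrt 2 * Real.cos (a + b)) * (Real.sqrt 2 * Real.cos (c + b))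
        = (Real.sqrt 2 * Real.sqrt 2) * (Real.cos (a+b) * Real.cos (c+b)) := by ring
      _ = 2 * Real.cos (a+b) * Real.cos (c+b) := by rw [hs]; ring
      _ = Real.cos ((a+b) - (c+b)) + Real.cos ((a+b) + (c+b)) := this
      _ = Real.cos (a - c) + Real.cos (2 * b + (a + c)) := by ring_nf
  simp_rw [hint]
  rw [integral_smul_measure, integral_Icc_eq_integral_Ioc,
    ← intervalIntegral.integral_of_le h2.le]
  rw [intervalIntegral.integral_add (intervalIntegrable_const (c := Real.cos (a-c)))
    ((Continuous.intervalIntegrable (by continuity) _ _))]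
  rw [intervalIntegral.integral_const]
  rw [intervalIntegral.integral_comp_mul_add Real.cos (two_ne_zero) (a + c)]
  rw [integral_cos]
  have hsin : Real.sin (2 * (2 * π) + (a + c)) = Real.sin (2 * 0 + (a + c)) := by
    rw [show 2 * (2*π) + (a+c) = ((a+c) + 2*π) + 2*π by ring, Real.sin_add_two_pi,
      Real.sin_add_two_pi]
    ring_nf
  rw [hsin]
  simp [ENNReal.toReal_ofReal (by positivity : (0:ℝ) ≤ (2*π)⁻¹), smul_eq_mul]
  field_simp
  rw [ENNReal.toReal_ofReal (by positivity), show π * 2 * (1 / (π * 2)) = 1 by field_simp]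
  ring


lemma char1 {v : ℝ≥0} (hv : v ≠ 0) (d : ℝ) :
    ∫ s : ℝ, Complex.exp (s * d * Complex.I) ∂(gaussianReal 0 v)
      = Complex.exp (-(v : ℝ) * d ^ 2 / 2) := by
  have hvpos : (0:ℝ) < v := lt_of_le_of_ne v.coe_nonneg (by exact_mod_cast hv.symm)
  rw [gaussianReal_of_var_ne_zero _ hv]
  have hmeas : Measurable fun x : ℝ => (gaussianPDFReal 0 v x).toNNReal :=
    (measurable_gaussianPDFReal 0 v).real_toNNReal
  have hpdf : gaussianPDF 0 v = fun x => ((gaussianPDFReal 0 v x).toNNReal : ℝ≥0∞) := by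
    funext x; rfl
  rw [hpdf, ← withDensity_congr_ae (Filter.EventuallyEq.refl _ _)]
  rw [integral_withDensity_eq_integral_smul hmeas]
  have hpt : ∀ s : ℝ, (gaussianPDFReal 0 v s).toNNReal • Complex.exp (s * d * Complex.I)
      = (Real.sqrt (2 * π * v))⁻¹ •
        Complex.exp ((-(2 * (v:ℝ))⁻¹ : ℂ) * s ^ 2 + (d * Complex.I) * s + 0) := by
    intro s
    rw [NNReal.smul_def, Real.coe_toNNReal _ (gaussianPDFReal_nonneg 0 v s)]
    unfold gaussianPDFReal
    rw [mul_smul]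
    congr 1
    rw [Complex.real_smul, Complex.ofReal_exp, ← Complex.exp_add]
    congr 1
    push_cast
    ring
  simp_rw [hpt]
  rw [integral_smul, integral_cexp_quadratic (by simp [hvpos] : (-(2 * (v:ℝ))⁻¹ : ℂ).re < 0)]
  have hb : (-(-(2 * (v:ℝ))⁻¹ : ℂ)) = ((2 * (v:ℝ))⁻¹ : ℝ) := by push_cast; ring
  rw [hb]
  have hpow : ((π : ℂ) / ((2 * (v:ℝ))⁻¹ : ℝ)) ^ (1/2 : ℂ) = (Real.sqrt (2 * π * v) : ℝ) := by
    have h1 : ((π : ℂ) / ((2 * (v:ℝ))⁻¹ : ℝ)) = ((2 * π * v : ℝ) : ℂ) := by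
      push_cast; field_simp
    rw [h1, show ((1/2 : ℂ)) = ((1/2 : ℝ) : ℂ) by norm_num,
      ← Complex.ofReal_cpow (by positivity), Real.sqrt_eq_rpow]
  rw [hpow]
  have hexp : ((0:ℂ) - (↑d * Complex.I) ^ 2 / (4 * -↑(2 * (v:ℝ))⁻¹))
      = ((-(v : ℝ) * d ^ 2 / 2 : ℝ) : ℂ) := by
    have : ((v:ℝ) : ℂ) ≠ 0 := by exact_mod_cast hvpos.ne'
    field_simp
    ring_nf
    simp [Complex.I_sq]
    field_simp
    ring
  rw [hexp]
  rw [Complex.real_smul, Complex.ofReal_inv, ← mul_assoc,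
    inv_mul_cancel₀ (by exact_mod_cast (by positivity : Real.sqrt (2 * π * (v:ℝ)) ≠ 0) :
      ((Real.sqrt (2 * π * (v:ℝ)) : ℝ) : ℂ) ≠ 0), one_mul]
  push_cast
  ring_nf

lemma pi_int {D : ℕ} (v : ℝ≥0) (f : Fin D → ℝ → ℂ) :
    ∫ s : Fin D → ℝ, ∏ i, f i (s i) ∂(Measure.pi fun _ : Fin D => gaussianReal 0 v)
      = ∏ i, ∫ t : ℝ, f i t ∂(gaussianReal 0 v) := by
  letI : MeasureSpace ℝ := ⟨gaussianReal 0 v⟩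
  haveI : SigmaFinite (volume : Measure ℝ) := by
    change SigmaFinite (gaussianReal 0 v); infer_instance
  exact MeasureTheory.integral_fintype_prod_eq_prod f

theorem rff_unbiased (D : ℕ) (ℓ : ℝ) (hℓ : 0 < ℓ) (x x' : EuclideanSpace ℝ (Fin D)) :
    (∫ s : Fin D → ℝ,
        (∫ b : ℝ,
            (Real.sqrt 2 * Real.cos ((∑ i, s i * x i) + b)) *
              (Real.sqrt 2 * Real.cos ((∑ i, s i * x' i) + b))
          ∂(ENNReal.ofReal (2 * π)⁻¹ • volume.restrict (Set.Icc 0 (2 * π))))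
      ∂(Measure.pi fun _ : Fin D => gaussianReal 0 ((ℓ ^ 2)⁻¹).toNNReal))
      = Real.exp (-‖x - x'‖ ^ 2 / (2 * ℓ ^ 2)) := by
  set v : ℝ≥0 := ((ℓ ^ 2)⁻¹).toNNReal with hv_def
  have hv : v ≠ 0 := by
    simp [hv_def, Real.toNNReal_eq_zero, not_le]
    positivity
  have hvcoe : (v : ℝ) = (ℓ ^ 2)⁻¹ := Real.coe_toNNReal _ (by positivity)
  set d : Fin D → ℝ := fun i => x i - x' i with hd_def
  -- Step 1: inner integral
  have step1 : ∀ s : Fin D → ℝ,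
      (∫ b : ℝ,
          (Real.sqrt 2 * Real.cos ((∑ i, s i * x i) + b)) *
            (Real.sqrt 2 * Real.cos ((∑ i, s i * x' i) + b))
        ∂(ENNReal.ofReal (2 * π)⁻¹ • volume.restrict (Set.Icc 0 (2 * π))))
      = Real.cos (∑ i, s i * d i) := by
    intro s
    rw [inner_int]
    congr 1
    simp only [hd_def, mul_sub, Finset.sum_sub_distrib]
  simp_rw [step1]
  -- Step 2: cos as real part of complex exponential
  have hmeas : IsProbabilityMeasure (Measure.pi fun _ : Fin D => gaussianReal 0 v) :=
    inferInstance
  have hcont : Continuous fun s : Fin D → ℝ => ((∑ i, s i * d i : ℝ) : ℂ) * Complex.I := by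
    fun_prop
  have hint : Integrable (fun s : Fin D → ℝ =>
      Complex.exp (((∑ i, s i * d i : ℝ) : ℂ) * Complex.I))
      (Measure.pi fun _ : Fin D => gaussianReal 0 v) := by
    apply MeasureTheory.Integrable.mono' (integrable_const 1)
      ((Complex.continuous_exp.comp hcont).aestronglyMeasurable)
    filter_upwards with s
    simp only [Function.comp_apply, Complex.norm_exp_ofReal_mul_I]
    exact le_refl 1
  have step2 : (∫ s : Fin D → ℝ, Real.cos (∑ i, s i * d i)
      ∂(Measure.pi fun _ : Fin D => gaussianReal 0 v))
      = (∫ s : Fin D → ℝ, Complex.exp (((∑ i, s i * d i : ℝ) : ℂ) * Complex.I)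
          ∂(Measure.pi fun _ : Fin D => gaussianReal 0 v)).re := by
    rw [← RCLike.re_to_complex, ← integral_re hint]
    congr 1
    funext s
    rw [RCLike.re_to_complex, Complex.exp_ofReal_mul_I_re]
  rw [step2]
  -- Step 3: factor the complex integral
  have hprod : ∀ s : Fin D → ℝ,
      Complex.exp (((∑ i, s i * d i : ℝ) : ℂ) * Complex.I)
        = ∏ i, Complex.exp ((s i : ℂ) * (d i : ℂ) * Complex.I) := by
    intro s
    rw [← Complex.exp_sum]
    congr 1
    push_cast
    rw [Finset.sum_mul]
  simp_rw [hprod]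
  rw [pi_int v fun i t => Complex.exp ((t : ℂ) * (d i : ℂ) * Complex.I)]
  simp_rw [char1 hv]
  -- Step 4: evaluate
  rw [← Complex.exp_sum]
  have : (∑ i, ((-(v : ℝ) * d i ^ 2 / 2 : ℝ) : ℂ))
      = ((∑ i, (-(v : ℝ) * d i ^ 2 / 2) : ℝ) : ℂ) := by push_cast; ring
  have harg : (∑ i, (-(v : ℝ) * (d i : ℂ) ^ 2 / 2))
      = ((∑ i, (-(v : ℝ) * d i ^ 2 / 2) : ℝ) : ℂ) := by push_cast; ring
  rw [harg, ← Complex.ofReal_exp, Complex.ofReal_re]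
  congr 1
  have hnorm : ‖x - x'‖ ^ 2 = ∑ i, d i ^ 2 := by
    rw [EuclideanSpace.norm_eq, Real.sq_sqrt (by positivity)]
    congr 1
    funext i
    simp [hd_def, _root_.sq_abs]
  rw [hnorm, hvcoe]
  rw [neg_div, ← Finset.sum_div]
  simp only [neg_mul, Finset.sum_neg_distrib]
  rw [← Finset.mul_sum]
  generalize (∑ i, d i ^ 2 : ℝ) = S
  field_simp
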